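/- Let $Z$ be a metric space, $j \geq 1$, and let $\mathcal{C}$ be a collection of at most $j$ closed balls in $Z$, each of radius at most $r$. Then there exists a pairwise disjoint collection $\mathcal{C}'$ of at most $j$ closed balls in $Z$, each of radius less than $4^j r$, such that the union of the interiors (open balls) of the balls in $\mathcal{C}'$ covers the union of the balls in $\mathcal{C}$. -/
import Mathlib

theorem stmt_aux {Z : Type*} [MetricSpace Z] (j : ℕ) : ∀ (r : ℝ), 0 < r →
    ∀ (C : Finset (Z × ℝ)), C.card ≤ j → (∀ p ∈ C, p.2 ≤ r) →
    ∃ C' : Finset (Z × ℝ), C'.card ≤ j ∧ (∀ p ∈ C', p.2 < 4 ^ j * r) ∧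
      ((C' : Set (Z × ℝ)).Pairwise fun p q =>
        Disjoint (Metric.closedBall p.1 p.2) (Metric.closedBall q.1 q.2)) ∧
      (⋃ p ∈ C, Metric.closedBall p.1 p.2) ⊆ ⋃ p ∈ C', Metric.ball p.1 p.2 := by
  induction j with
  | zero =>
    intro r hr C hcard _
    have hC : C = ∅ := Finset.card_eq_zero.mp (le_antisymm hcard (Nat.zero_le _))
    exact ⟨∅, by simp, by simp, by simp, by simp [hC]⟩
  | succ j ih =>
    classical
    intro r hr C hcard hrad
    by_cases hA : ∃ p ∈ C, ∃ q ∈ C, p ≠ q ∧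
        ¬ Disjoint (Metric.closedBall p.1 (p.2 + r/2)) (Metric.closedBall q.1 (q.2 + r/2))
    · obtain ⟨p, hp, q, hq, hpq, hnd⟩ := hA
      obtain ⟨z, hz1, hz2⟩ := Set.not_disjoint_iff.mp hnd
      rw [Metric.mem_closedBall] at hz1 hz2
      have hdist : dist p.1 q.1 ≤ p.2 + q.2 + r := by
        have := dist_triangle p.1 z q.1
        rw [dist_comm p.1 z] at this
        linarith
      set D : Finset (Z × ℝ) := insert (q.1, 4*r) ((C.erase p).erase q) with hD
      have hqmem : q ∈ C.erase p := Finset.mem_erase.mpr ⟨fun h => hpq h.symm, hq⟩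
      have hcardD : D.card ≤ j := by
        have h1 := Finset.card_insert_le (q.1, 4*r) ((C.erase p).erase q)
        have h2 : ((C.erase p).erase q).card = C.card - 2 := by
          rw [Finset.card_erase_of_mem hqmem, Finset.card_erase_of_mem hp]
          omega
        have h3 : 2 ≤ C.card := by
          have := Finset.one_lt_card_iff.mpr ⟨p, q, hp, hq, hpq⟩
          omega
        rw [hD]; omega
      have hradD : ∀ x ∈ D, x.2 ≤ 4*r := by
        intro x hx
        rcases Finset.mem_insert.mp hx with h | h
        · rw [h]
        · have hxC : x ∈ C := Finset.mem_of_mem_erase (Finset.mem_of_mem_erase h)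
          have := hrad x hxC
          linarith
      obtain ⟨C', hc1, hc2, hc3, hc4⟩ := ih (4*r) (by linarith) D hcardD hradD
      refine ⟨C', le_trans hc1 (Nat.le_succ j), ?_, hc3, ?_⟩
      · intro x hx
        have := hc2 x hx
        calc x.2 < 4 ^ j * (4*r) := this
        _ = 4 ^ (j+1) * r := by ring
      · refine subset_trans ?_ hc4
        intro y hy
        simp only [Set.mem_iUnion] at hy ⊢
        obtain ⟨x, hx, hyx⟩ := hy
        by_cases hxp : x = p
        · refine ⟨(q.1, 4*r), Finset.mem_insert_self _ _, ?_⟩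
          show dist y q.1 ≤ 4*r
          rw [hxp, Metric.mem_closedBall] at hyx
          have := dist_triangle y p.1 q.1
          have hp2 := hrad p hp
          have hq2 := hrad q hq
          linarith
        by_cases hxq : x = q
        · refine ⟨(q.1, 4*r), Finset.mem_insert_self _ _, ?_⟩
          show dist y q.1 ≤ 4*r
          rw [hxq, Metric.mem_closedBall] at hyx
          have hq2 := hrad q hq
          linarith
        · exact ⟨x, Finset.mem_insert_of_mem (Finset.mem_erase.mpr ⟨hxq,
            Finset.mem_erase.mpr ⟨hxp, hx⟩⟩), hyx⟩
    · push_neg at hA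
      refine ⟨C.image (fun p => (p.1, p.2 + r/2)), le_trans (Finset.card_image_le) hcard,
        ?_, ?_, ?_⟩
      · intro x hx
        obtain ⟨p, hp, hpx⟩ := Finset.mem_image.mp hx
        have hp2 := hrad p hp
        have h4 : (4:ℝ) ≤ 4 ^ (j+1) := by
          calc (4:ℝ) = 4^1 := by norm_num
          _ ≤ 4 ^ (j+1) := by
            apply pow_le_pow_right₀ (by norm_num) (by omega)
        rw [← hpx]
        simp only
        nlinarith
      · intro a ha b hb hab
        obtain ⟨p, hp, hpa⟩ := Finset.mem_image.mp (Finset.mem_coe.mp ha)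
        obtain ⟨q, hq, hqb⟩ := Finset.mem_image.mp (Finset.mem_coe.mp hb)
        have hpq : p ≠ q := by
          intro h; apply hab; rw [← hpa, ← hqb, h]
        have := hA p hp q hq hpq
        rw [← hpa, ← hqb]
        exact this
      · intro y hy
        simp only [Set.mem_iUnion] at hy ⊢
        obtain ⟨x, hx, hyx⟩ := hy
        refine ⟨(x.1, x.2 + r/2), Finset.mem_image_of_mem _ hx, ?_⟩
        rw [Metric.mem_ball]
        rw [Metric.mem_closedBall] at hyx
        linarith

/-- Ball-combining lemma: a collection of at most `j` closed balls of radius at most `r`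
in a metric space can be covered by the open balls of a pairwise disjoint collection of at
most `j` closed balls of radius less than `4^j * r`. -/
theorem stmt_0 {Z : Type*} [MetricSpace Z] (j : ℕ) (hj : 1 ≤ j) (r : ℝ) (hr : 0 < r)
    (C : Finset (Z × ℝ)) (hcard : C.card ≤ j) (hrad : ∀ p ∈ C, p.2 ≤ r) :
    ∃ C' : Finset (Z × ℝ), C'.card ≤ j ∧ (∀ p ∈ C', p.2 < 4 ^ j * r) ∧
      ((C' : Set (Z × ℝ)).Pairwise fun p q =>
        Disjoint (Metric.closedBall p.1 p.2) (Metric.closedBall q.1 q.2)) ∧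
      (⋃ p ∈ C, Metric.closedBall p.1 p.2) ⊆ ⋃ p ∈ C', Metric.ball p.1 p.2 :=
  stmt_aux j r hr C hcard hrad
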